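/- Let K be a number field, and let η ∈ Z_K be an algebraic integer that is not a root of unity. Let p be a prime number prime to η. If k ≥ 1 is an integer and ζ ∈ μ(K) is a root of unity such that η^k ≡ ζ (mod p Z_K), then k ≥ log(p − 1)/log(c₀(η)). -/

import Mathlib

open NumberField Polynomial

/-- `x ≡ y (mod I)` for `x : K`, `y : 𝓞 K`: `x` can be written as a fraction `a/b`
with `b` invertible mod `I` and `a ≡ y·b (mod I)`. -/
def CongMod (K : Type) [Field K] [NumberField K] (I : Ideal (𝓞 K)) (x : K) (y : 𝓞 K) : Prop :=
  ∃ a b : 𝓞 K, IsUnit (Ideal.Quotient.mk I b) ∧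
    algebraMap (𝓞 K) K a = x * algebraMap (𝓞 K) K b ∧
    Ideal.Quotient.mk I a = Ideal.Quotient.mk I (y * b)

/-- `η ∈ K^×` is a unit at every prime of `K` above `p`:
it is a quotient of two integers of `K` that are invertible modulo `p`. -/
def PrimeTo (K : Type) [Field K] [NumberField K] (p : ℕ) (η : K) : Prop :=
  ∃ a b : 𝓞 K,
    IsUnit (Ideal.Quotient.mk (Ideal.span {(p : 𝓞 K)}) a) ∧
    IsUnit (Ideal.Quotient.mk (Ideal.span {(p : 𝓞 K)}) b) ∧
    algebraMap (𝓞 K) K a = η * algebraMap (𝓞 K) K b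

/-- The set of integers `k ≥ 1` with `η^k ≡ 1 (mod I)`; its least element
is the order of `η` modulo `I`. -/
def OrderSet (K : Type) [Field K] [NumberField K] (I : Ideal (𝓞 K)) (η : K) : Set ℕ :=
  {k : ℕ | 0 < k ∧ CongMod K I (η ^ k) 1}

/-- `s` is the Frobenius of `𝔭` over `p`: `s x ≡ x^p (mod 𝔭)` for every integer `x` of `K`. -/
def IsFrob (K : Type) [Field K] [NumberField K] (p : ℕ)
    (𝔭 : Ideal (𝓞 K)) (s : K ≃ₐ[ℚ] K) : Prop :=
  ∀ x : 𝓞 K, galRestrict ℤ ℚ K (𝓞 K) s x - x ^ p ∈ 𝔭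

/-- `c₀(η)`: the maximum of the absolute values of the complex conjugates of `η`. -/
noncomputable def c0 (K : Type) [Field K] [NumberField K] (η : K) : ℝ :=
  ⨆ σ : K →+* ℂ, ‖σ η‖

/-- if `η ∈ Z_K` is not a root of unity and `η^k ≡ ζ (mod p Z_K)` with
`k ≥ 1` and `ζ ∈ μ(K)`, then `k ≥ log(p-1)/log(c₀(η))`. -/
theorem statement_11
    (K : Type) [Field K] [NumberField K]
    (η : 𝓞 K) (hηroot : ¬ ∃ m : ℕ, 0 < m ∧ η ^ m = 1)
    (p : ℕ) (hp : p.Prime)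
    (hpη : IsUnit (Ideal.Quotient.mk (Ideal.span {(p : 𝓞 K)}) η))
    (k : ℕ) (hk : 1 ≤ k)
    (ζ : 𝓞 K) (hζ : ∃ m : ℕ, 0 < m ∧ ζ ^ m = 1)
    (hcong : η ^ k - ζ ∈ Ideal.span {(p : 𝓞 K)}) :
    Real.log ((p : ℝ) - 1) / Real.log (c0 K (algebraMap (𝓞 K) K η)) ≤ k := by
  obtain ⟨m, hm, hζm⟩ := hζ
  set c := c0 K (algebraMap (𝓞 K) K η) with hc
  set x : 𝓞 K := η ^ k - ζ with hx
  have hx0 : x ≠ 0 := by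
    intro h
    apply hηroot
    exact ⟨k * m, by positivity, by
      rw [pow_mul, show η ^ k = ζ by linear_combination (norm := ring_nf) h - hx, hζm]⟩
  have hc0 : 0 ≤ c := Real.iSup_nonneg fun σ => (norm_nonneg _)
  set n := Module.finrank ℚ K with hn
  have hn0 : 0 < n := Module.finrank_pos
  -- norm bound
  have hNdvd : p ^ n ∣ Ideal.absNorm (Ideal.span {x}) := by
    have h1 : Ideal.absNorm (Ideal.span {(p : 𝓞 K)}) = p ^ n := by
      rw [Ideal.absNorm_span_singleton]
      have hq : ((Algebra.norm ℤ (p : 𝓞 K) : ℚ)) = (p : ℚ) ^ n := by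
        rw [Algebra.coe_norm_int]
        push_cast
        rw [show ((p : K)) = algebraMap ℚ K ((p : ℚ)) by simp]
        rw [Algebra.norm_algebraMap]
      have hz : Algebra.norm ℤ ((p : 𝓞 K)) = (p : ℤ) ^ n := by exact_mod_cast hq
      rw [hz, Int.natAbs_pow]
      simp
    rw [← h1]
    exact Ideal.absNorm_dvd_absNorm_of_le ((Ideal.span_singleton_le_iff_mem _).mpr hcong)
  have hN0 : Ideal.absNorm (Ideal.span {x}) ≠ 0 := by
    rw [Ne, Ideal.absNorm_eq_zero_iff, Ideal.span_singleton_eq_bot]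
    exact hx0
  have hple : (p : ℕ) ^ n ≤ Ideal.absNorm (Ideal.span {x}) :=
    Nat.le_of_dvd (Nat.pos_of_ne_zero hN0) hNdvd
  -- norm as product of embeddings
  have hprod : (Ideal.absNorm (Ideal.span {x}) : ℝ) =
      ∏ σ : K →ₐ[ℚ] ℂ, ‖σ (algebraMap (𝓞 K) K x)‖ := by
    rw [Ideal.absNorm_span_singleton]
    have h2 : ((Algebra.norm ℤ x : ℚ)) = Algebra.norm ℚ (algebraMap (𝓞 K) K x) :=
      Algebra.coe_norm_int x
    have h3 := Algebra.norm_eq_prod_embeddings ℚ ℂ (algebraMap (𝓞 K) K x)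
    have h4 := congrArg (‖·‖) h3
    rw [norm_prod] at h4
    rw [← h4, ← h2]
    rw [show (algebraMap ℚ ℂ) ((Algebra.norm ℤ x : ℚ)) = (((Algebra.norm ℤ x : ℤ) : ℝ) : ℂ) by push_cast; rfl]
    rw [Complex.norm_real, Real.norm_eq_abs, Nat.cast_natAbs, Int.cast_abs]
  -- bound each factor
  have hbound : ∀ σ : K →ₐ[ℚ] ℂ, ‖σ (algebraMap (𝓞 K) K x)‖ ≤ c ^ k + 1 := by
    intro σ
    have hxK : algebraMap (𝓞 K) K x = (algebraMap (𝓞 K) K η) ^ k - algebraMap (𝓞 K) K ζ := by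
      push_cast [hx]; ring
    have hη : ‖σ (algebraMap (𝓞 K) K η)‖ ≤ c := by
      exact le_ciSup (f := fun σ : K →+* ℂ => ‖σ (algebraMap (𝓞 K) K η)‖)
        (Set.Finite.bddAbove (Set.finite_range _)) (σ.toRingHom : K →+* ℂ)
    have hζ1 : ‖σ (algebraMap (𝓞 K) K ζ)‖ = 1 := by
      refine Complex.norm_eq_one_of_pow_eq_one (n := m) ?_ hm.ne'
      rw [← map_pow, ← map_pow, hζm]; simp
    rw [hxK, map_sub, map_pow]
    refine le_trans (norm_sub_le _ _) ?_
    rw [norm_pow, hζ1]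
    exact add_le_add_left (pow_le_pow_left₀ (norm_nonneg _) hη k) 1
  -- combine
  have hcard : Fintype.card (K →ₐ[ℚ] ℂ) = n := AlgHom.card ℚ K ℂ
  have hkey : (p : ℝ) ^ n ≤ (c ^ k + 1) ^ n := by
    calc (p:ℝ) ^ n ≤ (Ideal.absNorm (Ideal.span {x}) : ℝ) := by exact_mod_cast hple
    _ = ∏ σ : K →ₐ[ℚ] ℂ, ‖σ (algebraMap (𝓞 K) K x)‖ := hprod
    _ ≤ ∏ _σ : K →ₐ[ℚ] ℂ, (c ^ k + 1) :=
        Finset.prod_le_prod (fun σ _ => norm_nonneg _) (fun σ _ => hbound σ)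
    _ = (c ^ k + 1) ^ n := by rw [Finset.prod_const, Finset.card_univ, hcard]
  have hple2 : (p : ℝ) ≤ c ^ k + 1 := by
    refine (pow_le_pow_iff_left₀ (by positivity) (by positivity) hn0.ne').mp hkey
  have hfinal : (p : ℝ) - 1 ≤ c ^ k := by linarith
  rcases le_or_gt (Real.log c) 0 with hlog | hlog
  · have h1 : 0 ≤ Real.log ((p:ℝ) - 1) := Real.log_nonneg (by
      have := hp.two_le; push_cast; linarith [show (2:ℝ) ≤ (p:ℝ) by exact_mod_cast this])
    calc Real.log ((p:ℝ)-1) / Real.log c ≤ 0 := div_nonpos_of_nonneg_of_nonpos h1 hlog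
    _ ≤ k := by positivity
  · rw [div_le_iff₀ hlog]
    have : Real.log ((p:ℝ) - 1) ≤ Real.log (c ^ k) := by
      apply Real.log_le_log (by
        have := hp.two_le
        have : (2:ℝ) ≤ (p:ℝ) := by exact_mod_cast hp.two_le
        linarith) hfinal
    rwa [Real.log_pow] at this
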